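/- For every graph G, the following are equivalent: (1) G is P_4-free (a cograph); (2) for every induced subgraph H of G and every linear order O of V(H), the greedy colouring algorithm applied to (H,O) produces an optimal colouring of H. -/

import Mathlib

open Classical in
noncomputable def greedyStep {V : Type*} (G : SimpleGraph V) (f : V → ℕ) (v : V) : V → ℕ :=
  fun u => if u = v then sInf {c : ℕ | 1 ≤ c ∧ ∀ w, G.Adj v w → f w ≠ c} else f u

noncomputable def greedyFrom {V : Type*} (G : SimpleGraph V) (f : V → ℕ) (l : List V) : V → ℕ :=
  l.foldl (greedyStep G) f

noncomputable def greedy {V : Type*} (G : SimpleGraph V) (l : List V) : V → ℕ :=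
  greedyFrom G (fun _ => 0) l

open Classical in
noncomputable def greedyStart2 {V : Type*} (G : SimpleGraph V) : List V → V → ℕ
  | [] => fun _ => 0
  | v :: rest => greedyFrom G (fun u => if u = v then 2 else 0) rest

noncomputable def chi {V : Type*} [Fintype V] (G : SimpleGraph V) : ℕ :=
  sInf {n : ℕ | G.Colorable n}

open Classical in
noncomputable def idx {V : Type*} (l : List V) (v : V) : ℕ := l.idxOf v

noncomputable def maxIdx {V : Type*} (l : List V) (A : Set V) : ℕ := sSup (idx l '' A)
noncomputable def minIdx {V : Type*} (l : List V) (A : Set V) : ℕ := sInf (idx l '' A)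

def IsConnOrder {V : Type*} (G : SimpleGraph V) (l : List V) : Prop :=
  l.Nodup ∧ (∀ v : V, v ∈ l) ∧
    ∀ i : Fin l.length, 0 < i.1 → ∃ j : Fin l.length, j.1 < i.1 ∧ G.Adj (l.get j) (l.get i)

def GoodOrder {V : Type*} [Fintype V] (G : SimpleGraph V) (l : List V) : Prop :=
  ∀ v : V, greedy G l v ≤ chi G

def Good {V : Type*} [Fintype V] (G : SimpleGraph V) : Prop :=
  ∀ s : Finset V, (G.induce (↑s : Set V)).Connected →
    ∀ l : List ↥(↑s : Set V), IsConnOrder (G.induce (↑s : Set V)) l →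
      GoodOrder (G.induce (↑s : Set V)) l

def BadOrder {V : Type*} [Fintype V] (G : SimpleGraph V) (l : List V) : Prop :=
  IsConnOrder G l ∧ ¬ GoodOrder G l

def MinimallyBad {V : Type*} [Fintype V] (G : SimpleGraph V) : Prop :=
  ¬ Good G ∧ ∀ s : Finset V, s ≠ Finset.univ →
    (G.induce (↑s : Set V)).Connected → Good (G.induce (↑s : Set V))

def IsInducedPath {V : Type*} (G : SimpleGraph V) (P : List V) : Prop :=
  P.Nodup ∧ ∀ i j : Fin P.length,
    G.Adj (P.get i) (P.get j) ↔ (i.1 + 1 = j.1 ∨ j.1 + 1 = i.1)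

def IsFlatPath {V : Type*} (G : SimpleGraph V) (P : List V) : Prop :=
  IsInducedPath G P ∧
    ∀ i : Fin P.length, 0 < i.1 → i.1 + 1 < P.length → (G.neighborSet (P.get i)).ncard = 2

def WellOrderedPath {V : Type*} (l P : List V) : Prop :=
  P.Pairwise (fun u v => idx l u < idx l v) ∨ P.Pairwise (fun u v => idx l v < idx l u)

def IsMaxFlatPath {V : Type*} (G : SimpleGraph V) (P : List V) : Prop :=
  IsFlatPath G P ∧ ∀ h : P ≠ [],
    (G.neighborSet (P.head h)).ncard ≠ 2 ∧ (G.neighborSet (P.getLast h)).ncard ≠ 2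

def ClawFree {V : Type*} (G : SimpleGraph V) : Prop :=
  ∀ a b c d : V, G.Adj a b → G.Adj a c → G.Adj a d → b ≠ c → b ≠ d → c ≠ d →
    G.Adj b c ∨ G.Adj b d ∨ G.Adj c d

def IsHole {V : Type*} (G : SimpleGraph V) (C : List V) : Prop :=
  4 ≤ C.length ∧ C.Nodup ∧
    ∀ i j : Fin C.length, G.Adj (C.get i) (C.get j) ↔
      ((i.1 + 1) % C.length = j.1 ∨ (j.1 + 1) % C.length = i.1)

def GemFree {V : Type*} (G : SimpleGraph V) : Prop :=
  ¬ ∃ a b c d e : V, G.Adj a b ∧ G.Adj b c ∧ G.Adj c d ∧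
    ¬ G.Adj a c ∧ ¬ G.Adj a d ∧ ¬ G.Adj b d ∧
    G.Adj e a ∧ G.Adj e b ∧ G.Adj e c ∧ G.Adj e d


set_option linter.unusedSectionVars false
set_option maxHeartbeats 1000000

section Greedy
variable {W : Type*} [Fintype W] (H : SimpleGraph W)

lemma greedyFrom_cons (f : W → ℕ) (a : W) (m : List W) :
    greedyFrom H f (a :: m) = greedyFrom H (greedyStep H f a) m := rfl

lemma greedyFrom_append (f : W → ℕ) (m₁ m₂ : List W) :
    greedyFrom H f (m₁ ++ m₂) = greedyFrom H (greedyFrom H f m₁) m₂ :=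
  List.foldl_append

lemma greedyFrom_not_mem {f : W → ℕ} {m : List W} {u : W} (h : u ∉ m) :
    greedyFrom H f m u = f u := by
  induction m generalizing f with
  | nil => rfl
  | cons a m ih =>
    rw [greedyFrom_cons]
    have hne : u ≠ a := fun he => h (by rw [he]; exact List.mem_cons_self)
    rw [ih (fun hm => h (List.mem_cons_of_mem a hm))]
    exact if_neg hne

lemma greedySet_mem (f : W → ℕ) (v : W) :
    sInf {c : ℕ | 1 ≤ c ∧ ∀ w, H.Adj v w → f w ≠ c} ∈
      {c : ℕ | 1 ≤ c ∧ ∀ w, H.Adj v w → f w ≠ c} := by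
  apply Nat.sInf_mem
  refine ⟨1 + Finset.univ.sup f, by omega, fun w _ => ?_⟩
  have : f w ≤ Finset.univ.sup f := Finset.le_sup (Finset.mem_univ w)
  omega

lemma greedy_split {l₁ l₂ : List W} {v : W} (hnd : (l₁ ++ v :: l₂).Nodup) :
    greedy H (l₁ ++ v :: l₂) v =
      sInf {c : ℕ | 1 ≤ c ∧ ∀ w, H.Adj v w → greedyFrom H (fun _ => 0) l₁ w ≠ c} := by
  have hv2 : v ∉ l₂ := by
    have := List.Nodup.of_append_right hnd
    exact (List.nodup_cons.1 this).1
  rw [greedy, greedyFrom_append, greedyFrom_cons, greedyFrom_not_mem H hv2, greedyStep, if_pos rfl]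

lemma greedy_stable {l₁ l₂ : List W} {v w : W} (hnd : (l₁ ++ v :: l₂).Nodup) (hw : w ∈ l₁) :
    greedyFrom H (fun _ => 0) l₁ w = greedy H (l₁ ++ v :: l₂) w := by
  have hw2 : w ∉ v :: l₂ := by
    intro hmem
    exact (List.disjoint_of_nodup_append hnd) hw hmem
  rw [greedy, greedyFrom_append, greedyFrom_not_mem H hw2]

lemma greedy_pos {l : List W} (hnd : l.Nodup) {v : W} (hv : v ∈ l) :
    1 ≤ greedy H l v := by
  obtain ⟨l₁, l₂, rfl⟩ := List.append_of_mem hv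
  rw [greedy_split H hnd]
  exact (greedySet_mem H _ v).1

lemma greedy_proper {l : List W} (hnd : l.Nodup) {u v : W} (hu : u ∈ l) (hv : v ∈ l)
    (huv : H.Adj u v) : greedy H l u ≠ greedy H l v := by
  -- reduce to the case where u appears before v or after
  have key : ∀ (m₁ m₂ : List W) (a b : W), (m₁ ++ b :: m₂).Nodup → a ∈ m₁ → H.Adj a b →
      greedy H (m₁ ++ b :: m₂) a ≠ greedy H (m₁ ++ b :: m₂) b := by
    intro m₁ m₂ a b hnd' ha hab
    rw [greedy_split H hnd']
    have hmem := greedySet_mem H (greedyFrom H (fun _ => 0) m₁) b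
    have := hmem.2 a hab.symm
    rw [greedy_stable H hnd' ha] at this
    exact this
  obtain ⟨l₁, l₂, hsplit⟩ := List.append_of_mem hv
  subst hsplit
  rcases List.mem_append.1 hu with hu1 | hu2
  · exact key l₁ l₂ u v hnd hu1 huv
  · rcases List.mem_cons.1 hu2 with rfl | hu2
    · exact absurd rfl huv.ne
    · obtain ⟨m₁, m₂, hsplit2⟩ := List.append_of_mem hu2
      have hre : l₁ ++ v :: l₂ = (l₁ ++ v :: m₁) ++ u :: m₂ := by
        rw [hsplit2]; simp
      rw [hre] at hnd ⊢
      exact (key (l₁ ++ v :: m₁) m₂ v u hnd (by simp) huv.symm).symm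

lemma greedy_grundy {l : List W} (hnd : l.Nodup) {v : W} (hv : v ∈ l) {m : ℕ}
    (h1 : 1 ≤ m) (hm : m < greedy H l v) :
    ∃ w, w ∈ l ∧ H.Adj v w ∧ greedy H l w = m := by
  obtain ⟨l₁, l₂, rfl⟩ := List.append_of_mem hv
  rw [greedy_split H hnd] at hm
  have hnotmem : m ∉ {c : ℕ | 1 ≤ c ∧ ∀ w, H.Adj v w → greedyFrom H (fun _ => 0) l₁ w ≠ c} :=
    fun hmem => absurd (Nat.sInf_le hmem) (by omega)
  simp only [Set.mem_setOf_eq, not_and, not_forall, not_not] at hnotmem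
  obtain ⟨w, hadj, hw⟩ := hnotmem h1
  have hwl1 : w ∈ l₁ := by
    by_contra hwn
    rw [greedyFrom_not_mem H hwn] at hw
    omega
  refine ⟨w, List.mem_append_left _ hwl1, hadj, ?_⟩
  rw [← greedy_stable H hnd hwl1, hw]

end Greedy



section Aux
variable {V : Type*} [Fintype V] (G : SimpleGraph V)

def ProperOn (s : Finset V) (c : V → ℕ) : Prop :=
  ∀ u ∈ s, ∀ v ∈ s, G.Adj u v → c u ≠ c v

def GrundyOn (s : Finset V) (c : V → ℕ) : Prop :=
  (∀ v ∈ s, 1 ≤ c v) ∧ ProperOn G s c ∧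
    ∀ v ∈ s, ∀ m, 1 ≤ m → m < c v → ∃ w ∈ s, G.Adj v w ∧ c w = m

noncomputable def chiOn (s : Finset V) : ℕ := chi (G.induce (↑s : Set V))

lemma colorable_of_properOn {s : Finset V} {c : V → ℕ} {n : ℕ}
    (hlt : ∀ v ∈ s, c v < n) (hp : ProperOn G s c) :
    (G.induce (↑s : Set V)).Colorable n := by
  refine ⟨SimpleGraph.Coloring.mk (fun v => ⟨c v.1, hlt v.1 (by exact_mod_cast v.2)⟩) ?_⟩
  intro u v huv
  have : G.Adj u.1 v.1 := huv
  have := hp u.1 (by exact_mod_cast u.2) v.1 (by exact_mod_cast v.2) this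
  simp only [ne_eq, Fin.mk.injEq]
  exact this

lemma chiOn_le_of_properOn {s : Finset V} {c : V → ℕ} {n : ℕ}
    (hlt : ∀ v ∈ s, c v < n) (hp : ProperOn G s c) : chiOn G s ≤ n :=
  Nat.sInf_le (colorable_of_properOn G hlt hp)

lemma chiOn_colorable (s : Finset V) : (G.induce (↑s : Set V)).Colorable (chiOn G s) :=
  Nat.sInf_mem (s := {n : ℕ | (G.induce (↑s : Set V)).Colorable n})
    ⟨_, (G.induce (↑s : Set V)).colorable_of_fintype⟩

lemma exists_optimal_properOn (s : Finset V) :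
    ∃ c : V → ℕ, ProperOn G s c ∧ ∀ v ∈ s, c v < chiOn G s := by
  classical
  obtain ⟨C⟩ := chiOn_colorable G s
  refine ⟨fun v => if h : v ∈ s then (C ⟨v, by exact_mod_cast h⟩ : Fin _) else 0, ?_, ?_⟩
  · intro u hu v hv huv
    have h := C.valid (v := ⟨u, by exact_mod_cast hu⟩) (w := ⟨v, by exact_mod_cast hv⟩) huv
    simpa [hu, hv, Fin.val_eq_val] using h
  · intro v hv
    simp only [hv, dif_pos]
    exact (C ⟨v, by exact_mod_cast hv⟩).2

lemma chiOn_mono {A s : Finset V} (hAs : A ⊆ s) : chiOn G A ≤ chiOn G s := by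
  obtain ⟨c, hp, hlt⟩ := exists_optimal_properOn G s
  exact chiOn_le_of_properOn G (fun v hv => hlt v (hAs hv))
    (fun u hu v hv => hp u (hAs hu) v (hAs hv))

lemma chiOn_pos {s : Finset V} (hs : s.Nonempty) : 1 ≤ chiOn G s := by
  by_contra h
  have h0 : chiOn G s = 0 := by omega
  obtain ⟨C⟩ := chiOn_colorable G s
  rw [h0] at C
  obtain ⟨x, hx⟩ := hs
  exact (C ⟨x, by exact_mod_cast hx⟩).elim0




lemma exists_rank (T : Finset ℕ) (j : ℕ) (hj : j < T.card) :
    ∃ t ∈ T, (T.filter (fun x => x < t)).card = j := by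
  classical
  set e := T.orderIsoOfFin rfl with he
  refine ⟨(e ⟨j, hj⟩ : ℕ), (e ⟨j, hj⟩).2, ?_⟩
  have hset : T.filter (fun x => x < (e ⟨j, hj⟩ : ℕ))
      = (Finset.univ : Finset (Fin j)).image (fun i => (e ⟨i.1, i.2.trans hj⟩ : ℕ)) := by
    ext x
    simp only [Finset.mem_filter, Finset.mem_image, Finset.mem_univ, true_and]
    constructor
    · rintro ⟨hxT, hlt⟩
      set i := e.symm ⟨x, hxT⟩ with hi
      have hx : e i = ⟨x, hxT⟩ := e.apply_symm_apply _
      have hij : i < ⟨j, hj⟩ := by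
        rw [← e.lt_iff_lt, hx]
        exact Subtype.mk_lt_mk.2 hlt
      refine ⟨⟨i.1, hij⟩, ?_⟩
      show ((e ⟨i.1, _⟩ : {x // x ∈ T}) : ℕ) = x
      rw [show (⟨i.1, _⟩ : Fin T.card) = i from Fin.ext rfl, hx]
    · rintro ⟨i, rfl⟩
      refine ⟨(e ⟨i.1, _⟩).2, ?_⟩
      have : (⟨i.1, i.2.trans hj⟩ : Fin T.card) < ⟨j, hj⟩ := Fin.mk_lt_mk.2 i.2
      have := e.lt_iff_lt.2 this
      exact Subtype.mk_lt_mk.1 (by exact this)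
  rw [hset, Finset.card_image_of_injective, Finset.card_univ, Fintype.card_fin]
  intro i1 i2 hii
  have : (⟨i1.1, i1.2.trans hj⟩ : Fin T.card) = ⟨i2.1, i2.2.trans hj⟩ :=
    e.injective (Subtype.ext hii)
  exact Fin.ext (by simpa using this)

lemma rank_card_lt {S : Finset ℕ} {x y : ℕ} (hx : x ∈ S) (hxy : x < y) :
    (S.filter (fun t => t < x)).card < (S.filter (fun t => t < y)).card := by
  apply Finset.card_lt_card
  constructor
  · intro t ht
    simp only [Finset.mem_filter] at *
    exact ⟨ht.1, by omega⟩
  · intro hsub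
    have : x ∈ S.filter (fun t => t < y) := Finset.mem_filter.2 ⟨hx, hxy⟩
    have := hsub this
    simp at this

lemma properOn_rank {s : Finset V} {c : V → ℕ} (hp : ProperOn G s c) (S : Finset ℕ)
    (hS : ∀ v ∈ s, c v ∈ S) :
    ProperOn G s (fun v => (S.filter (fun t => t < c v)).card) ∧
      ∀ v ∈ s, (S.filter (fun t => t < c v)).card < S.card := by
  constructor
  · intro u hu v hv huv
    have hne := hp u hu v hv huv
    rcases Nat.lt_or_ge (c u) (c v) with h | h
    · exact Nat.ne_of_lt (rank_card_lt (hS u hu) h)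
    · have h' : c v < c u := by omega
      exact (Nat.ne_of_lt (rank_card_lt (hS v hv) h')).symm
  · intro v hv
    apply Finset.card_lt_card
    constructor
    · exact Finset.filter_subset _ _
    · intro hsub
      have := hsub (hS v hv)
      simp at this

lemma chiOn_join [DecidableEq V] {A B : Finset V} (hAB : Disjoint A B)
    (hjoin : ∀ a ∈ A, ∀ b ∈ B, G.Adj a b) :
    chiOn G A + chiOn G B ≤ chiOn G (A ∪ B) := by
  classical
  obtain ⟨c, hp, hlt⟩ := exists_optimal_properOn G (A ∪ B)
  set n := chiOn G (A ∪ B) with hn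
  set SA := A.image c with hSA
  set SB := B.image c with hSB
  have hDisj : Disjoint SA SB := by
    rw [Finset.disjoint_left]
    rintro t htA htB
    obtain ⟨a, ha, hca⟩ := Finset.mem_image.1 htA
    obtain ⟨b, hb, hcb⟩ := Finset.mem_image.1 htB
    exact hp a (Finset.mem_union_left _ ha) b (Finset.mem_union_right _ hb)
      (hjoin a ha b hb) (by rw [hca, hcb])
  have hsub : SA ∪ SB ⊆ Finset.range n := by
    intro t ht
    rcases Finset.mem_union.1 ht with h | h
    · obtain ⟨a, ha, hca⟩ := Finset.mem_image.1 h
      exact Finset.mem_range.2 (hca ▸ hlt a (Finset.mem_union_left _ ha))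
    · obtain ⟨b, hb, hcb⟩ := Finset.mem_image.1 h
      exact Finset.mem_range.2 (hcb ▸ hlt b (Finset.mem_union_right _ hb))
  have hA : chiOn G A ≤ SA.card := by
    obtain ⟨hprop, hbd⟩ := properOn_rank G
      (fun u hu v hv => hp u (Finset.mem_union_left _ hu) v (Finset.mem_union_left _ hv))
      SA (fun v hv => Finset.mem_image_of_mem c hv)
    exact chiOn_le_of_properOn G hbd hprop
  have hB : chiOn G B ≤ SB.card := by
    obtain ⟨hprop, hbd⟩ := properOn_rank G
      (fun u hu v hv => hp u (Finset.mem_union_right _ hu) v (Finset.mem_union_right _ hv))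
      SB (fun v hv => Finset.mem_image_of_mem c hv)
    exact chiOn_le_of_properOn G hbd hprop
  calc chiOn G A + chiOn G B ≤ SA.card + SB.card := by omega
    _ = (SA ∪ SB).card := (Finset.card_union_of_disjoint hDisj).symm
    _ ≤ (Finset.range n).card := Finset.card_le_card hsub
    _ = n := Finset.card_range n



end Aux

section Decomp
variable {V : Type*} (G : SimpleGraph V)

def MyP4Free : Prop :=
  ∀ a b c d : V, G.Adj a b → G.Adj b c → G.Adj c d →
    ¬ G.Adj a c → ¬ G.Adj a d → ¬ G.Adj b d → False

def Split (s : Finset V) : Prop :=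
  ∃ A ⊆ s, A.Nonempty ∧ A ≠ s ∧
    ((∀ a ∈ A, ∀ b ∈ s, b ∉ A → ¬ G.Adj a b) ∨ (∀ a ∈ A, ∀ b ∈ s, b ∉ A → G.Adj a b))

variable {G}

lemma myP4Free_compl (h : MyP4Free G) : MyP4Free Gᶜ := by
  intro a b c d hab hbc hcd hac had hbd
  have hacne : a ≠ c := by rintro rfl; exact had hcd
  have hadne : a ≠ d := by rintro rfl; exact hbd hab.symm
  have hbdne : b ≠ d := by rintro rfl; exact had hab
  have hGac : G.Adj a c := by
    by_contra hcon
    exact hac ⟨hacne, hcon⟩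
  have hGad : G.Adj a d := by
    by_contra hcon
    exact had ⟨hadne, hcon⟩
  have hGbd : G.Adj b d := by
    by_contra hcon
    exact hbd ⟨hbdne, hcon⟩
  have hnab : ¬ G.Adj a b := ((SimpleGraph.compl_adj G a b).1 hab).2
  have hnbc : ¬ G.Adj b c := ((SimpleGraph.compl_adj G b c).1 hbc).2
  have hncd : ¬ G.Adj c d := ((SimpleGraph.compl_adj G c d).1 hcd).2
  exact h b d a c hGbd hGad.symm hGac (fun hh => hnab hh.symm) hnbc (fun hh => hncd hh.symm)

lemma split_compl {s : Finset V} (h : Split Gᶜ s) : Split G s := by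
  obtain ⟨A, hsub, hne, hneq, hbr⟩ := h
  refine ⟨A, hsub, hne, hneq, ?_⟩
  rcases hbr with hl | hr
  · right
    intro a ha b hb hbA
    have hne' : a ≠ b := fun he => hbA (he ▸ ha)
    have := hl a ha b hb hbA
    simp only [SimpleGraph.compl_adj, not_and, not_not] at this
    exact this hne'
  · left
    intro a ha b hb hbA
    exact (hr a ha b hb hbA).2

lemma step1 [DecidableEq V] (hP4 : MyP4Free G) {v : V} {t A : Finset V} (hvt : v ∉ t) (hAt : A ⊆ t)
    (hcross : ∀ a ∈ A, ∀ b ∈ t, b ∉ A → ¬ G.Adj a b)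
    (hz : ∃ z ∈ A, ¬ G.Adj v z) (hb : ∃ b ∈ t, b ∉ A ∧ G.Adj v b) :
    Split G (insert v t) := by
  classical
  obtain ⟨z₀, hz₀A, hz₀⟩ := hz
  obtain ⟨b₀, hb₀t, hb₀A, hb₀⟩ := hb
  by_cases h : ∃ a' ∈ A, ∃ z' ∈ A, G.Adj v a' ∧ ¬ G.Adj v z' ∧ G.Adj a' z'
  · obtain ⟨a', ha'A, z', hz'A, hva', hvz', ha'z'⟩ := h
    exact absurd (hP4 b₀ v a' z' hb₀.symm hva' ha'z'
      (fun hh => hcross a' ha'A b₀ hb₀t hb₀A hh.symm)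
      (fun hh => hcross z' hz'A b₀ hb₀t hb₀A hh.symm) hvz') (by simp)
  · push_neg at h
    refine ⟨A.filter (fun z => ¬ G.Adj v z), ?_, ⟨z₀, Finset.mem_filter.2 ⟨hz₀A, hz₀⟩⟩, ?_, ?_⟩
    · exact fun x hx => Finset.mem_insert_of_mem (hAt (Finset.mem_filter.1 hx).1)
    · intro heq
      have hvmem : v ∈ A.filter (fun z => ¬ G.Adj v z) := heq ▸ Finset.mem_insert_self v t
      exact hvt (hAt (Finset.mem_filter.1 hvmem).1)
    · left
      intro x hx y hy hyn
      obtain ⟨hxA, hvx⟩ := Finset.mem_filter.1 hx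
      rcases Finset.mem_insert.1 hy with rfl | hyt
      · exact fun hh => hvx hh.symm
      · by_cases hyA : y ∈ A
        · have hvy : G.Adj v y := by
            by_contra hvy
            exact hyn (Finset.mem_filter.2 ⟨hyA, hvy⟩)
          exact fun hh => h y hyA x hxA hvy hvx hh.symm
        · exact hcross x hxA y hyt hyA

lemma stepU [DecidableEq V] (hP4 : MyP4Free G) {v : V} {t A : Finset V} (hvt : v ∉ t) (hAt : A ⊆ t)
    (hAne : A.Nonempty) (hAnt : A ≠ t)
    (hcross : ∀ a ∈ A, ∀ b ∈ t, b ∉ A → ¬ G.Adj a b) :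
    Split G (insert v t) := by
  classical
  obtain ⟨b₁, hb₁t, hb₁A⟩ : ∃ b ∈ t, b ∉ A := by
    by_contra hcon
    push_neg at hcon
    exact hAnt (Finset.Subset.antisymm hAt hcon)
  by_cases hallA : ∀ a ∈ A, ¬ G.Adj v a
  · refine ⟨A, fun x hx => Finset.mem_insert_of_mem (hAt hx), hAne, ?_, Or.inl ?_⟩
    · intro heq
      have : v ∈ A := heq ▸ Finset.mem_insert_self v t
      exact hvt (hAt this)
    · intro a ha b hb hbA
      rcases Finset.mem_insert.1 hb with rfl | hbt
      · exact fun hh => hallA a ha hh.symm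
      · exact hcross a ha b hbt hbA
  · push_neg at hallA
    obtain ⟨a₂, ha₂A, hva₂⟩ := hallA
    by_cases hallB : ∀ b ∈ t, b ∉ A → ¬ G.Adj v b
    · refine ⟨t \ A, fun x hx => Finset.mem_insert_of_mem ((Finset.mem_sdiff.1 hx).1),
        ⟨b₁, Finset.mem_sdiff.2 ⟨hb₁t, hb₁A⟩⟩, ?_, Or.inl ?_⟩
      · intro heq
        have : v ∈ t \ A := heq ▸ Finset.mem_insert_self v t
        exact hvt (Finset.mem_sdiff.1 this).1
      · intro x hx y hy hyn
        obtain ⟨hxt, hxA⟩ := Finset.mem_sdiff.1 hx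
        rcases Finset.mem_insert.1 hy with rfl | hyt
        · exact fun hh => hallB x hxt hxA hh.symm
        · have hyA : y ∈ A := by
            by_contra hyA
            exact hyn (Finset.mem_sdiff.2 ⟨hyt, hyA⟩)
          exact fun hh => hcross y hyA x hxt hxA hh.symm
    · push_neg at hallB
      obtain ⟨b₂, hb₂t, hb₂A, hvb₂⟩ := hallB
      by_cases hallz : ∀ z ∈ t, G.Adj v z
      · refine ⟨{v}, fun x hx => (Finset.mem_singleton.1 hx) ▸ Finset.mem_insert_self v t,
          ⟨v, Finset.mem_singleton_self v⟩, ?_, Or.inr ?_⟩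
        · intro heq
          have : b₁ ∈ ({v} : Finset V) := heq ▸ Finset.mem_insert_of_mem hb₁t
          exact hvt ((Finset.mem_singleton.1 this) ▸ hb₁t)
        · intro a ha b hb hbv
          rw [Finset.mem_singleton.1 ha]
          rcases Finset.mem_insert.1 hb with rfl | hbt
          · exact absurd (Finset.mem_singleton_self b) hbv
          · exact hallz b hbt
      · push_neg at hallz
        obtain ⟨z₂, hz₂t, hvz₂⟩ := hallz
        by_cases hz₂A : z₂ ∈ A
        · exact step1 hP4 hvt hAt hcross ⟨z₂, hz₂A, hvz₂⟩ ⟨b₂, hb₂t, hb₂A, hvb₂⟩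
        · refine step1 hP4 hvt (Finset.sdiff_subset) ?_
            ⟨z₂, Finset.mem_sdiff.2 ⟨hz₂t, hz₂A⟩, hvz₂⟩
            ⟨a₂, hAt ha₂A, fun hmem => (Finset.mem_sdiff.1 hmem).2 ha₂A, hva₂⟩
          intro x hx y hy hyn
          obtain ⟨hxt, hxA⟩ := Finset.mem_sdiff.1 hx
          have hyA : y ∈ A := by
            by_contra hyA
            exact hyn (Finset.mem_sdiff.2 ⟨hy, hyA⟩)
          exact fun hh => hcross y hyA x hxt hxA hh.symm

lemma split_of_myP4Free [DecidableEq V] (hP4 : MyP4Free G) :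
    ∀ n : ℕ, ∀ s : Finset V, s.card = n → 2 ≤ n → Split G s := by
  intro n
  induction n using Nat.strong_induction_on with
  | _ n ih =>
    intro s hcard h2
    rcases Nat.lt_or_ge n 3 with h3 | h3
    · -- n = 2
      have : s.card = 2 := by omega
      obtain ⟨a, b, hab, hs⟩ := Finset.card_eq_two.1 this
      clear hcard h2 h3 this
      subst hs
      have hbmem : b ∈ ({a, b} : Finset V) := by simp
      refine ⟨{a}, by simp, ⟨a, Finset.mem_singleton_self a⟩, ?_, ?_⟩
      · intro heq
        have : b ∈ ({a} : Finset V) := heq ▸ hbmem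
        exact hab ((Finset.mem_singleton.1 this).symm)
      · have hmem : ∀ y ∈ ({a, b} : Finset V), y ∉ ({a} : Finset V) → y = b := by
          intro y hy hyn
          rcases Finset.mem_insert.1 hy with rfl | hyb
          · exact absurd (Finset.mem_singleton_self y) hyn
          · exact Finset.mem_singleton.1 hyb
        by_cases hadj : G.Adj a b
        · right
          intro x hx y hy hyn
          rw [Finset.mem_singleton.1 hx, hmem y hy hyn]
          exact hadj
        · left
          intro x hx y hy hyn
          rw [Finset.mem_singleton.1 hx, hmem y hy hyn]
          exact hadj
    · -- n ≥ 3
      classical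
      have hne : s.Nonempty := Finset.card_pos.1 (by omega)
      obtain ⟨v, hv⟩ := hne
      set t := s.erase v with ht
      have htcard : t.card = n - 1 := by rw [ht, Finset.card_erase_of_mem hv, hcard]
      have hsp : Split G t := ih (n-1) (by omega) t htcard (by omega)
      have hins : insert v t = s := Finset.insert_erase hv
      have hvt : v ∉ t := Finset.notMem_erase v s
      obtain ⟨A, hAt, hAne, hAnt, hbr⟩ := hsp
      rw [← hins]
      rcases hbr with hU | hJ
      · exact stepU hP4 hvt hAt hAne hAnt hU
      · apply split_compl
        apply stepU (myP4Free_compl hP4) hvt hAt hAne hAnt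
        intro a ha b hb hbA
        simp only [SimpleGraph.compl_adj, not_and, not_not]
        intro _
        exact hJ a ha b hb hbA

end Decomp


section Main
variable {V : Type*} [Fintype V] {G : SimpleGraph V}

lemma union_restrict {A s : Finset V} {c : V → ℕ} (hsub : A ⊆ s)
    (hcross : ∀ a ∈ A, ∀ b ∈ s, b ∉ A → ¬ G.Adj a b) (h : GrundyOn G s c) :
    GrundyOn G A c := by
  obtain ⟨hpos, hprop, hgr⟩ := h
  refine ⟨fun v hv => hpos v (hsub hv), fun u hu v hv => hprop u (hsub hu) v (hsub hv), ?_⟩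
  intro v hv m h1 hm
  obtain ⟨w, hws, hadj, hcw⟩ := hgr v (hsub hv) m h1 hm
  refine ⟨w, ?_, hadj, hcw⟩
  by_contra hwA
  exact hcross v hv w hws hwA hadj

lemma grundy_rank [DecidableEq V] {A B : Finset V} {c : V → ℕ} (hd : Disjoint A B)
    (hjoin : ∀ a ∈ A, ∀ b ∈ B, G.Adj a b) (hc : GrundyOn G (A ∪ B) c) :
    GrundyOn G A (fun u => ((A.image c).filter (fun t => t < c u)).card + 1) := by
  obtain ⟨hpos, hprop, hgr⟩ := hc
  set SA := A.image c with hSA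
  have hSdisj : ∀ t, t ∈ SA → t ∈ B.image c → False := by
    intro t htA htB
    obtain ⟨a, ha, hca⟩ := Finset.mem_image.1 htA
    obtain ⟨b, hb, hcb⟩ := Finset.mem_image.1 htB
    exact hprop a (Finset.mem_union_left _ ha) b (Finset.mem_union_right _ hb)
      (hjoin a ha b hb) (by rw [hca, hcb])
  have hproperA : ProperOn G A c := fun u hu v hv huv =>
    hprop u (Finset.mem_union_left _ hu) v (Finset.mem_union_left _ hv) huv
  obtain ⟨hprop', _⟩ := properOn_rank G hproperA SA (fun v hv => Finset.mem_image_of_mem c hv)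
  refine ⟨fun v _ => by show 1 ≤ _ + 1; omega, ?_, ?_⟩
  · intro u hu v hv huv heq
    exact hprop' u hu v hv huv (Nat.add_right_cancel heq)
  · intro v hv m h1 hm
    have hm' : m < (SA.filter (fun t => t < c v)).card + 1 := hm
    set T := SA.filter (fun t => t < c v) with hT
    have hmT : m - 1 < T.card := by omega
    obtain ⟨t, htT, htcard⟩ := exists_rank T (m - 1) hmT
    obtain ⟨htSA, htlt⟩ := Finset.mem_filter.1 htT
    have htpos : 1 ≤ t := by
      obtain ⟨a, ha, hca⟩ := Finset.mem_image.1 htSA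
      exact hca ▸ hpos a (Finset.mem_union_left _ ha)
    obtain ⟨w, hws, hadj, hcw⟩ := hgr v (Finset.mem_union_left _ hv) t htpos htlt
    rcases Finset.mem_union.1 hws with hwA | hwB
    · refine ⟨w, hwA, hadj, ?_⟩
      have hfil : SA.filter (fun x => x < c w) = T.filter (fun x => x < t) := by
        ext x
        simp only [hT, Finset.mem_filter, hcw]
        constructor
        · rintro ⟨h1', h2'⟩
          exact ⟨⟨h1', h2'.trans htlt⟩, h2'⟩
        · rintro ⟨⟨h1', _⟩, h3'⟩
          exact ⟨h1', h3'⟩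
      show (SA.filter (fun x => x < c w)).card + 1 = m
      rw [hfil, htcard]
      omega
    · exact absurd (hcw ▸ Finset.mem_image_of_mem c hwB) (fun hh => hSdisj t htSA hh)

lemma join_side [DecidableEq V] {A B : Finset V} {c : V → ℕ} (hd : Disjoint A B)
    (hjoin : ∀ a ∈ A, ∀ b ∈ B, G.Adj a b) (hc : GrundyOn G (A ∪ B) c)
    (IHA : ∀ c' : V → ℕ, GrundyOn G A c' → ∀ v ∈ A, c' v ≤ chiOn G A)
    (IHB : ∀ c' : V → ℕ, GrundyOn G B c' → ∀ v ∈ B, c' v ≤ chiOn G B) :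
    ∀ v ∈ A, c v ≤ chiOn G A + chiOn G B := by
  intro v hv
  set SA := A.image c with hSA
  set SB := B.image c with hSB
  have hcA := grundy_rank hd hjoin hc
  have hcB := grundy_rank hd.symm (fun b hb a ha => (hjoin a ha b hb).symm)
    (by rwa [Finset.union_comm])
  have hAbound : (SA.filter (fun t => t < c v)).card + 1 ≤ chiOn G A := IHA _ hcA v hv
  -- interval covering
  have hIco : Finset.Ico 1 (c v) ⊆
      SA.filter (fun t => t < c v) ∪ SB.filter (fun t => t < c v) := by
    intro m hm
    obtain ⟨h1, h2⟩ := Finset.mem_Ico.1 hm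
    obtain ⟨w, hws, hadj, hcw⟩ := hc.2.2 v (Finset.mem_union_left _ hv) m h1 h2
    rcases Finset.mem_union.1 hws with hwA | hwB
    · exact Finset.mem_union_left _ (Finset.mem_filter.2 ⟨hcw ▸ Finset.mem_image_of_mem c hwA, h2⟩)
    · exact Finset.mem_union_right _ (Finset.mem_filter.2 ⟨hcw ▸ Finset.mem_image_of_mem c hwB, h2⟩)
  have hcount : c v - 1 ≤ (SA.filter (fun t => t < c v)).card + (SB.filter (fun t => t < c v)).card := by
    calc c v - 1 = (Finset.Ico 1 (c v)).card := by rw [Nat.card_Ico]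
    _ ≤ (SA.filter (fun t => t < c v) ∪ SB.filter (fun t => t < c v)).card :=
        Finset.card_le_card hIco
    _ ≤ _ := Finset.card_union_le _ _
  have hSBbound : (SB.filter (fun t => t < c v)).card ≤ chiOn G B := by
    rcases Finset.eq_empty_or_nonempty SB with he | hne
    · have : SB.filter (fun t => t < c v) = ∅ := by
        rw [he]; rfl
      simp [this]
    · obtain ⟨u, hu, hcu⟩ := Finset.mem_image.1 (SB.max'_mem hne)
      have hBb : (SB.filter (fun t => t < c u)).card + 1 ≤ chiOn G B := IHB _ hcB u hu
      have hfil : SB.filter (fun t => t < c u) = SB.erase (SB.max' hne) := by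
        ext x
        simp only [Finset.mem_filter, Finset.mem_erase, hcu]
        constructor
        · rintro ⟨h1, h2⟩; exact ⟨Nat.ne_of_lt h2, h1⟩
        · rintro ⟨h1, h2⟩
          exact ⟨h2, lt_of_le_of_ne (SB.le_max' x h2) h1⟩
      rw [hfil] at hBb
      rw [Finset.card_erase_of_mem (SB.max'_mem hne)] at hBb
      have hSBpos : 1 ≤ SB.card := Finset.card_pos.2 hne
      have : (SB.filter (fun t => t < c v)).card ≤ SB.card := Finset.card_le_card (Finset.filter_subset _ _)
      omega
  have hApos : 1 ≤ chiOn G A := chiOn_pos G ⟨v, hv⟩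
  have hposv : 1 ≤ c v := hc.1 v (Finset.mem_union_left _ hv)
  omega

theorem grundy_le_chiOn [DecidableEq V] (hP4 : MyP4Free G) :
    ∀ n : ℕ, ∀ s : Finset V, s.card = n → ∀ c : V → ℕ, GrundyOn G s c →
      ∀ v ∈ s, c v ≤ chiOn G s := by
  intro n
  induction n using Nat.strong_induction_on with
  | _ n ih =>
    intro s hcard c hc v hv
    rcases Nat.lt_or_ge n 2 with h2 | h2
    · -- at most one vertex
      have hle1 : c v ≤ 1 := by
        by_contra hcon
        obtain ⟨w, hws, hadj, _⟩ := hc.2.2 v hv 1 le_rfl (by omega)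
        have : w = v := by
          have h1 : s.card ≤ 1 := by omega
          by_contra hne
          have : 2 ≤ s.card := Finset.one_lt_card.2 ⟨v, hv, w, hws, fun he => hne he.symm⟩
          omega
        exact G.loopless.irrefl v (this ▸ hadj)
      exact hle1.trans (chiOn_pos G ⟨v, hv⟩)
    · obtain ⟨A, hAs, hAne, hAneq, hbr⟩ := split_of_myP4Free hP4 n s hcard h2
      have hAcard : A.card < n := hcard ▸ Finset.card_lt_card (lt_of_le_of_ne hAs hAneq)
      set B := s \ A with hB
      have hBcard : B.card < n := by
        have : B ⊂ s := by
          rw [hB]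
          exact Finset.sdiff_ssubset hAs hAne
        exact hcard ▸ Finset.card_lt_card this
      rcases hbr with hU | hJ
      · -- union case
        have hcrossB : ∀ a ∈ B, ∀ b ∈ s, b ∉ B → ¬ G.Adj a b := by
          intro a ha b hb hbB hadj
          obtain ⟨has, haA⟩ := Finset.mem_sdiff.1 ha
          have hbA : b ∈ A := by
            by_contra hcon
            exact hbB (Finset.mem_sdiff.2 ⟨hb, hcon⟩)
          exact hU b hbA a has haA hadj.symm
        by_cases hvA : v ∈ A
        · have := ih A.card hAcard A rfl c (union_restrict hAs hU hc) v hvA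
          exact this.trans (chiOn_mono G hAs)
        · have hvB : v ∈ B := Finset.mem_sdiff.2 ⟨hv, hvA⟩
          have := ih B.card hBcard B rfl c
            (union_restrict (Finset.sdiff_subset) hcrossB hc) v hvB
          exact this.trans (chiOn_mono G (Finset.sdiff_subset))
      · -- join case
        have hd : Disjoint A B := Finset.disjoint_sdiff
        have hunion : A ∪ B = s := Finset.union_sdiff_of_subset hAs
        have hjoin : ∀ a ∈ A, ∀ b ∈ B, G.Adj a b := by
          intro a ha b hb
          obtain ⟨hbs, hbA⟩ := Finset.mem_sdiff.1 hb
          exact hJ a ha b hbs hbA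
        have hc' : GrundyOn G (A ∪ B) c := hunion.symm ▸ hc
        have IHA : ∀ c' : V → ℕ, GrundyOn G A c' → ∀ u ∈ A, c' u ≤ chiOn G A :=
          fun c' hc'' u hu => ih A.card hAcard A rfl c' hc'' u hu
        have IHB : ∀ c' : V → ℕ, GrundyOn G B c' → ∀ u ∈ B, c' u ≤ chiOn G B :=
          fun c' hc'' u hu => ih B.card hBcard B rfl c' hc'' u hu
        have hfin : c v ≤ chiOn G A + chiOn G B := by
          rcases Finset.mem_union.1 (hunion.symm ▸ hv) with hvA | hvB
          · exact join_side hd hjoin hc' IHA IHB v hvA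
          · have := join_side hd.symm (fun b hb a ha => (hjoin a ha b hb).symm)
              (by rwa [Finset.union_comm]) IHB IHA v hvB
            omega
        calc c v ≤ chiOn G A + chiOn G B := hfin
          _ ≤ chiOn G (A ∪ B) := chiOn_join G hd hjoin
          _ = chiOn G s := by rw [hunion]

end Main


lemma sInf_eq_of {S : Set ℕ} {k : ℕ} (hk : k ∈ S) (hlow : ∀ m ∈ S, k ≤ m) : sInf S = k :=
  le_antisymm (Nat.sInf_le hk) (le_csInf ⟨k, hk⟩ hlow)

theorem stmt16 {V : Type*} [Fintype V] (G : SimpleGraph V) :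
    (∀ a b c d : V, G.Adj a b → G.Adj b c → G.Adj c d →
      ¬ G.Adj a c → ¬ G.Adj a d → ¬ G.Adj b d → False) ↔
    (∀ s : Finset V, ∀ l : List ↥(↑s : Set V), l.Nodup → (∀ v, v ∈ l) →
      ∀ v, greedy (G.induce (↑s : Set V)) l v ≤ chi (G.induce (↑s : Set V))) := by
  classical
  constructor
  · intro hP4 s l hnd hcov v
    set H := G.induce (↑s : Set V) with hH
    set cf : V → ℕ := fun x => if h : x ∈ (↑s : Set V) then greedy H l ⟨x, h⟩ else 0 with hcf
    have hGr : GrundyOn G s cf := by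
      refine ⟨?_, ?_, ?_⟩
      · intro x hx
        have hx' : x ∈ (↑s : Set V) := Finset.mem_coe.2 hx
        rw [hcf]
        simp only [hx', dif_pos]
        exact greedy_pos H hnd (hcov ⟨x, hx'⟩)
      · intro u hu w hw huw
        have hu' : u ∈ (↑s : Set V) := Finset.mem_coe.2 hu
        have hw' : w ∈ (↑s : Set V) := Finset.mem_coe.2 hw
        have hadj : H.Adj ⟨u, hu'⟩ ⟨w, hw'⟩ := huw
        rw [hcf]
        simp only [hu', hw', dif_pos]
        exact greedy_proper H hnd (hcov _) (hcov _) hadj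
      · intro x hx m h1 hm
        have hx' : x ∈ (↑s : Set V) := Finset.mem_coe.2 hx
        rw [hcf] at hm
        simp only [hx', dif_pos] at hm
        obtain ⟨w, hwl, hadj, hcw⟩ := greedy_grundy H hnd (hcov ⟨x, hx'⟩) h1 hm
        refine ⟨w.1, Finset.mem_coe.1 w.2, hadj, ?_⟩
        rw [hcf]
        simp only [w.2, dif_pos]
        rw [← hcw]
    have hkey := grundy_le_chiOn hP4 s.card s rfl cf hGr v.1 (Finset.mem_coe.1 v.2)
    have hval : cf v.1 = greedy H l v := by
      rw [hcf]
      simp only [v.2, dif_pos]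
    rw [hval] at hkey
    exact hkey
  · intro hRHS a b c d hab hbc hcd hac had hbd
    have hac' : a ≠ c := by rintro rfl; exact had hcd
    have had' : a ≠ d := by rintro rfl; exact hbd hab.symm
    have hbd' : b ≠ d := by rintro rfl; exact had hab
    have hab' : a ≠ b := hab.ne
    have hbc' : b ≠ c := hbc.ne
    have hcd' : c ≠ d := hcd.ne
    set s : Finset V := {a, b, c, d} with hs
    set H := G.induce (↑s : Set V) with hH
    have hma : a ∈ (↑s : Set V) := by simp [hs]
    have hmb : b ∈ (↑s : Set V) := by simp [hs]
    have hmc : c ∈ (↑s : Set V) := by simp [hs]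
    have hmd : d ∈ (↑s : Set V) := by simp [hs]
    set va : ↥(↑s : Set V) := ⟨a, hma⟩ with hva
    set vb : ↥(↑s : Set V) := ⟨b, hmb⟩ with hvb
    set vc : ↥(↑s : Set V) := ⟨c, hmc⟩ with hvc
    set vd : ↥(↑s : Set V) := ⟨d, hmd⟩ with hvd
    set l : List ↥(↑s : Set V) := [va, vd, vb, vc] with hl
    have hnd : l.Nodup := by
      refine List.nodup_cons.2 ⟨?_, List.nodup_cons.2 ⟨?_, List.nodup_cons.2 ⟨?_,
        List.nodup_singleton _⟩⟩⟩
      · simp only [List.mem_cons, List.not_mem_nil, List.mem_singleton, or_false]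
        rintro (h | h | h)
        exacts [had' (congrArg Subtype.val h), hab' (congrArg Subtype.val h),
          hac' (congrArg Subtype.val h)]
      · simp only [List.mem_cons, List.not_mem_nil, List.mem_singleton, or_false]
        rintro (h | h)
        exacts [hbd' (congrArg Subtype.val h).symm, hcd' (congrArg Subtype.val h).symm]
      · simp only [List.mem_singleton]
        intro h
        exact hbc' (congrArg Subtype.val h)
    have hcov : ∀ v : ↥(↑s : Set V), v ∈ l := by
      rintro ⟨x, hx⟩
      have : x = a ∨ x = b ∨ x = c ∨ x = d := by
        simpa [hs] using hx
      rcases this with rfl | rfl | rfl | rfl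
      · exact List.mem_cons_self
      · simp [hl, hvb]
      · simp [hl, hvc]
      · simp [hl, hvd]
    -- adjacency transfer
    have adjH : ∀ (x y : ↥(↑s : Set V)), H.Adj x y ↔ G.Adj x.1 y.1 := by
      intro x y
      rw [hH]
      exact SimpleGraph.comap_adj
    have hmem4 : ∀ w : ↥(↑s : Set V), w = va ∨ w = vb ∨ w = vc ∨ w = vd := by
      rintro ⟨x, hx⟩
      have : x = a ∨ x = b ∨ x = c ∨ x = d := by simpa [hs] using hx
      rcases this with rfl | rfl | rfl | rfl
      · exact Or.inl rfl
      · exact Or.inr (Or.inl rfl)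
      · exact Or.inr (Or.inr (Or.inl rfl))
      · exact Or.inr (Or.inr (Or.inr rfl))
    have hA : greedy H [va, vd, vb, vc] va = 1 := by
      have hsp := greedy_split H (l₁ := []) (l₂ := [vd, vb, vc]) (v := va) hnd
      simp only [List.nil_append, List.cons_append] at hsp
      rw [hsp]
      apply sInf_eq_of
      · exact ⟨le_rfl, fun w _ => by simp [greedyFrom]⟩
      · exact fun m hm => hm.1
    have hD : greedy H [va, vd, vb, vc] vd = 1 := by
      have hsp := greedy_split H (l₁ := [va]) (l₂ := [vb, vc]) (v := vd) hnd
      simp only [List.nil_append, List.cons_append] at hsp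
      rw [hsp]
      apply sInf_eq_of
      · refine ⟨le_rfl, fun w hw => ?_⟩
        by_cases hwa : w = va
        · subst hwa
          exact absurd ((adjH _ _).1 hw).symm had
        · rw [greedyFrom_not_mem H (by simpa using hwa)]
          simp
      · exact fun m hm => hm.1
    have hstable2 : greedyFrom H (fun _ => 0) [va, vd] va = 1 := by
      have hst := greedy_stable H (l₁ := [va, vd]) (l₂ := [vc]) (v := vb) (w := va) hnd (by simp)
      simp only [List.nil_append, List.cons_append] at hst
      rw [hst]
      exact hA
    have hstable2d : greedyFrom H (fun _ => 0) [va, vd] vd = 1 := by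
      have hst := greedy_stable H (l₁ := [va, vd]) (l₂ := [vc]) (v := vb) (w := vd) hnd (by simp)
      simp only [List.nil_append, List.cons_append] at hst
      rw [hst]
      exact hD
    have hB : greedy H [va, vd, vb, vc] vb = 2 := by
      have hsp := greedy_split H (l₁ := [va, vd]) (l₂ := [vc]) (v := vb) hnd
      simp only [List.nil_append, List.cons_append] at hsp
      rw [hsp]
      apply sInf_eq_of
      · refine ⟨by omega, fun w _ => ?_⟩
        rcases hmem4 w with rfl | rfl | rfl | rfl
        · rw [hstable2]; omega
        · rw [greedyFrom_not_mem H (by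
            simp only [List.mem_cons, List.not_mem_nil, List.mem_singleton, or_false]
            rintro (h | h)
            · exact hab' (congrArg Subtype.val h).symm
            · exact hbd' (congrArg Subtype.val h))]
          simp
        · rw [greedyFrom_not_mem H (by
            simp only [List.mem_cons, List.not_mem_nil, List.mem_singleton, or_false]
            rintro (h | h)
            · exact hac' (congrArg Subtype.val h).symm
            · exact hcd' (congrArg Subtype.val h))]
          simp
        · rw [hstable2d]; omega
      · intro m hm
        have h1 := hm.1
        have h2 := hm.2 va ((adjH _ _).2 hab.symm)
        rw [hstable2] at h2
        omega
    have hstable3a : greedyFrom H (fun _ => 0) [va, vd, vb] va = 1 := by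
      have hst := greedy_stable H (l₁ := [va, vd, vb]) (l₂ := []) (v := vc) (w := va) hnd (by simp)
      simp only [List.nil_append, List.cons_append] at hst
      rw [hst]
      exact hA
    have hstable3d : greedyFrom H (fun _ => 0) [va, vd, vb] vd = 1 := by
      have hst := greedy_stable H (l₁ := [va, vd, vb]) (l₂ := []) (v := vc) (w := vd) hnd (by simp)
      simp only [List.nil_append, List.cons_append] at hst
      rw [hst]
      exact hD
    have hstable3b : greedyFrom H (fun _ => 0) [va, vd, vb] vb = 2 := by
      have hst := greedy_stable H (l₁ := [va, vd, vb]) (l₂ := []) (v := vc) (w := vb) hnd (by simp)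
      simp only [List.nil_append, List.cons_append] at hst
      rw [hst]
      exact hB
    have hC : greedy H [va, vd, vb, vc] vc = 3 := by
      have hsp := greedy_split H (l₁ := [va, vd, vb]) (l₂ := []) (v := vc) hnd
      simp only [List.nil_append, List.cons_append] at hsp
      rw [hsp]
      apply sInf_eq_of
      · refine ⟨by omega, fun w _ => ?_⟩
        rcases hmem4 w with rfl | rfl | rfl | rfl
        · rw [hstable3a]; omega
        · rw [hstable3b]; omega
        · rw [greedyFrom_not_mem H (by
            simp only [List.mem_cons, List.not_mem_nil, List.mem_singleton, or_false]
            rintro (h | h | h)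
            · exact hac' (congrArg Subtype.val h).symm
            · exact hcd' (congrArg Subtype.val h)
            · exact hbc' (congrArg Subtype.val h).symm)]
          simp
        · rw [hstable3d]; omega
      · intro m hm
        have h1 := hm.1
        have h2 := hm.2 vd ((adjH _ _).2 hcd)
        rw [hstable3d] at h2
        have h3 := hm.2 vb ((adjH _ _).2 hbc.symm)
        rw [hstable3b] at h3
        omega
    have hkey := hRHS s [va, vd, vb, vc] hnd hcov vc
    rw [hC] at hkey
    -- now show chi H ≤ 2
    have hcol : H.Colorable 2 := by
      refine ⟨SimpleGraph.Coloring.mk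
        (fun x => if x.1 = a ∨ x.1 = c then (0 : Fin 2) else 1) ?_⟩
      intro u w hadj
      have hG : G.Adj u.1 w.1 := (adjH _ _).1 hadj
      have hu : u.1 = a ∨ u.1 = b ∨ u.1 = c ∨ u.1 = d := by simpa [hs] using u.2
      have hw : w.1 = a ∨ w.1 = b ∨ w.1 = c ∨ w.1 = d := by simpa [hs] using w.2
      show (if u.1 = a ∨ u.1 = c then (0 : Fin 2) else 1) ≠
        (if w.1 = a ∨ w.1 = c then (0 : Fin 2) else 1)
      rcases hu with hu | hu | hu | hu <;> rcases hw with hw | hw | hw | hw <;>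
        rw [hu, hw] at hG ⊢ <;>
        first
          | exact absurd hG (G.loopless.irrefl _)
          | exact absurd hG hac
          | exact absurd hG.symm hac
          | exact absurd hG hbd
          | exact absurd hG.symm hbd
          | simp [hab', hac', had', hbc', hbd', hcd', Ne.symm hab', Ne.symm hac',
              Ne.symm had', Ne.symm hbc', Ne.symm hbd', Ne.symm hcd']
    have hchile : chi H ≤ 2 := Nat.sInf_le hcol
    rw [← hH] at hkey
    omega
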